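/- A tridiagonal (scalar, n×n) matrix with nonzero even-indexed diagonal entries admits one scalar cyclic reduction step, and the resulting reduced matrix on odd indices is again tridiagonal with entries d'_j = d_j - e_j f_{j-1}/d_{j-1} - f_j e_{j+1}/d_{j+1}, e'_j = -e_j e_{j-1}/d_{j-1}, f'_j = -f_j f_{j+1}/d_{j+1} (boundary terms omitted), and the odd part of any solution of the original system solves the reduced system with right-hand side f'_j = b_j - e_j b_{j-1}/d_{j-1} - f_j b_{j+1}/d_{j+1}. -/

import Mathlib

/-- Scalar cyclic reduction step for a tridiagonal system: if `x` solves the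
tridiagonal system with diagonal `d`, subdiagonal `e`, superdiagonal `f` and
right-hand side `b` (entries outside the index range `0..2m-1` being zero),
and the even-indexed diagonal entries are nonzero, then the odd part of `x`
solves the reduced tridiagonal system with the cyclic reduction entries. -/
theorem scalar_cyclic_reduction_step
    (m : ℕ) (d e f b x : ℕ → ℝ)
    (hE0 : e 0 = 0) (hEtop : ∀ j, 2 * m ≤ j → e j = 0)
    (hFtop : ∀ j, 2 * m - 1 ≤ j → f j = 0)
    (hd : ∀ j, j < 2 * m → j % 2 = 0 → d j ≠ 0)
    (hsys : ∀ i, i < 2 * m → e i * x (i - 1) + d i * x i + f i * x (i + 1) = b i) :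
    ∀ i, i < m →
      (-(e (2 * i + 1) * e (2 * i) / d (2 * i))) * x (2 * i - 1) +
        (d (2 * i + 1) - e (2 * i + 1) * f (2 * i) / d (2 * i)
          - f (2 * i + 1) * e (2 * i + 2) / d (2 * i + 2)) * x (2 * i + 1) +
        (-(f (2 * i + 1) * f (2 * i + 2) / d (2 * i + 2))) * x (2 * i + 3) =
      b (2 * i + 1) - e (2 * i + 1) * b (2 * i) / d (2 * i)
        - f (2 * i + 1) * b (2 * i + 2) / d (2 * i + 2) := by
  intro i hi
  have hd1 : d (2 * i) ≠ 0 := hd _ (by omega) (by omega)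
  have h1 := hsys (2 * i) (by omega)
  have h2 := hsys (2 * i + 1) (by omega)
  simp only [Nat.add_sub_cancel] at h2
  by_cases hlast : 2 * i + 2 < 2 * m
  · have hd2 : d (2 * i + 2) ≠ 0 := hd _ hlast (by omega)
    have h3 := hsys (2 * i + 2) (by omega)
    rw [show 2 * i + 2 - 1 = 2 * i + 1 by omega] at h3
    rw [← h1, ← h2, ← h3]
    field_simp
    ring
  · have hf : f (2 * i + 1) = 0 := hFtop _ (by omega)
    rw [← h1, ← h2, hf]
    field_simp
    ring
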